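/- Let α be strictly increasing with α_n > 1 and α_n → ∞, and suppose S_1(α) := {s ∈ ℝ : Σ_{n=1}^∞ e^{α_n}/n^s < ∞} is non-empty. Then {λ ∈ ℂ : |λ − 1/2| < 1/2} ∪ {1/m : m ≥ 1} ⊆ σ(C; Λ₀(α)) ⊆ {λ ∈ ℂ : |λ − 1/2| ≤ 1/2}. In particular, the closure of σ(C; Λ₀(α)) equals the closed disc {λ ∈ ℂ : |λ − 1/2| ≤ 1/2}. -/

import Mathlib

open Filter Finset Topology

noncomputable section

/-- The weight `w_k(n) = e^{-alpha_n / k}`.  Indices are shifted by one: the natural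
numbers `k n : Nat` represent the indices `k+1` and `n+1` (both running from `1`). -/
def wt (a : ℕ → ℝ) (k n : ℕ) : ℝ := Real.exp (-(a n) / ((k : ℝ) + 1))

/-- Membership in the power series space of finite type `Λ₀(α)`:
`x ∈ Λ₀(α)` iff `w_k(n)|x_n| → 0` for every `k ≥ 1`. -/
def memLambda (a : ℕ → ℝ) (x : ℕ → ℂ) : Prop :=
  ∀ k : ℕ, Tendsto (fun n => wt a k n * ‖x n‖) atTop (𝓝 0)

/-- The norm `p_k(x) = sup_n w_k(n)|x_n|` generating the Fréchet topology of `Λ₀(α)`. -/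
def pk (a : ℕ → ℝ) (k : ℕ) (x : ℕ → ℂ) : ℝ := ⨆ n : ℕ, wt a k n * ‖x n‖

/-- The discrete Cesàro operator `(C x)_n = (x_1 + ⋯ + x_n)/n` (0-indexed). -/
def cesaro (x : ℕ → ℂ) : ℕ → ℂ := fun n => (∑ i ∈ Finset.range (n + 1), x i) / ((n : ℂ) + 1)

/-- `S_k(α) = {s ∈ ℝ : ∑ₙ e^{α_n/k} / n^s < ∞}` (again `k : Nat` represents `k+1`). -/
def Sk (a : ℕ → ℝ) (k : ℕ) : Set ℝ :=
  {s : ℝ | Summable fun n : ℕ => Real.exp (a n / ((k : ℝ) + 1)) / ((n : ℝ) + 1) ^ s}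

/-- `lam` belongs to the resolvent set of the Cesàro operator on `Λ₀(α)`:
`lam • I - C` has a linear inverse `T` on `Λ₀(α)` which is continuous for the
Fréchet topology generated by the norms `p_k`. -/
def InResolvent (a : ℕ → ℝ) (lam : ℂ) : Prop :=
  ∃ T : (ℕ → ℂ) → (ℕ → ℂ),
    (∀ x, memLambda a x → memLambda a (T x)) ∧
    (∀ x y, memLambda a x → memLambda a y → T (x + y) = T x + T y) ∧
    (∀ (c : ℂ) (x), memLambda a x → T (c • x) = c • T x) ∧
    (∀ k : ℕ, ∃ l : ℕ, ∃ M : ℝ, 0 < M ∧ ∀ x, memLambda a x → pk a k (T x) ≤ M * pk a l x) ∧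
    (∀ x, memLambda a x → T (lam • x - cesaro x) = x) ∧
    (∀ x, memLambda a x → lam • T x - cesaro (T x) = x)

/-! ### auxiliary definitions -/

def ee (m : ℕ) : ℕ → ℂ := fun n => if n = m then 1 else 0

def dd (lam : ℂ) (n : ℕ) : ℂ := lam - 1/((n:ℂ)+1)

lemma wt_pos (a : ℕ → ℝ) (k n : ℕ) : 0 < wt a k n := Real.exp_pos _

lemma memLambda_ee (a : ℕ → ℝ) (m : ℕ) : memLambda a (ee m) := by
  intro k
  have h : (fun n => wt a k n * ‖ee m n‖) =ᶠ[atTop] (fun _ => (0:ℝ)) := by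
    filter_upwards [eventually_gt_atTop m] with n hn
    simp [ee, Nat.ne_of_gt hn]
  rw [tendsto_congr' h]
  exact tendsto_const_nhds

lemma apply_op (lam : ℂ) (x : ℕ → ℂ) (n : ℕ) :
    (lam • x - cesaro x) n = lam * x n - (∑ i ∈ Finset.range (n+1), x i)/((n:ℂ)+1) := rfl

/-! ### Part 2 : the reciprocals 1/(m+1) are in the spectrum -/

lemma not_inres_recip (a : ℕ → ℝ) (m : ℕ) : ¬ InResolvent a (1/((m:ℂ)+1)) := by
  rintro ⟨T, hT1, -, -, -, -, hT6⟩
  set lam : ℂ := 1/((m:ℂ)+1) with hlam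
  set u : ℕ → ℂ := T (ee m) with hu
  have heq : lam • u - cesaro u = ee m := hT6 _ (memLambda_ee a m)
  have hcast : ∀ n : ℕ, ((n:ℂ)+1) ≠ 0 := fun n => Nat.cast_add_one_ne_zero n
  have hzero : ∀ n, n ≤ m → ∑ i ∈ Finset.range n, u i = 0 := by
    intro n
    induction n with
    | zero => intro _; simp
    | succ n ih =>
      intro hn
      have h0 : ∑ i ∈ Finset.range n, u i = 0 := ih (Nat.le_of_succ_le hn)
      have hc := congrFun heq n
      rw [apply_op] at hc
      have hnm : n ≠ m := Nat.ne_of_lt hn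
      rw [Finset.sum_range_succ, h0, zero_add] at hc ⊢
      rw [show ee m n = 0 by simp [ee, hnm]] at hc
      -- hc : lam * u n - u n / (n+1) = 0
      have hne : lam - 1/((n:ℂ)+1) ≠ 0 := by
        rw [hlam, sub_ne_zero]
        intro h
        have h2 := (div_eq_div_iff (hcast m) (hcast n)).mp h
        simp only [one_mul] at h2
        have h3 : m + 1 = n + 1 := by exact_mod_cast h2.symm
        exact hnm (by omega)
      have : (lam - 1/((n:ℂ)+1)) * u n = 0 := by
        linear_combination hc
      rcases mul_eq_zero.mp this with h | h
      · exact absurd h hne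
      · rw [h]
  have hc := congrFun heq m
  rw [apply_op] at hc
  rw [Finset.sum_range_succ, hzero m le_rfl, zero_add] at hc
  rw [show ee m m = 1 by simp [ee]] at hc
  rw [hlam] at hc
  exact zero_ne_one (show (0:ℂ) = 1 by linear_combination hc)

/-! ### geometry of the disc -/

lemma normSq_lt_re {lam : ℂ} (h : ‖lam - 1/2‖ < 1/2) :
    Complex.normSq lam < lam.re := by
  have h2 : Complex.normSq (lam - 1/2) < (1/2)^2 := by
    rw [Complex.norm_def] at h
    have := Real.lt_sq_of_sqrt_lt h
    linarith
  rw [Complex.normSq_apply] at h2 ⊢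
  simp only [Complex.sub_re, Complex.sub_im] at h2
  have hre : ((1:ℂ)/2).re = 1/2 := by norm_num
  have him : ((1:ℂ)/2).im = 0 := by norm_num
  rw [hre, him] at h2
  nlinarith [sq_nonneg lam.im]

lemma re_lt_normSq {lam : ℂ} (h : 1/2 < ‖lam - 1/2‖) :
    lam.re < Complex.normSq lam := by
  have h2 : (1/2)^2 < Complex.normSq (lam - 1/2) := by
    rw [Complex.norm_def] at h
    have h3 := pow_lt_pow_left₀ h (by norm_num : (0:ℝ) ≤ 1/2) two_ne_zero
    rw [Real.sq_sqrt (Complex.normSq_nonneg _)] at h3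
    linarith
  rw [Complex.normSq_apply] at h2 ⊢
  simp only [Complex.sub_re, Complex.sub_im] at h2
  have hre : ((1:ℂ)/2).re = 1/2 := by norm_num
  have him : ((1:ℂ)/2).im = 0 := by norm_num
  rw [hre, him] at h2
  nlinarith [sq_nonneg lam.im]

lemma disc_lt_ne_zero {lam : ℂ} (h : ‖lam - 1/2‖ < 1/2) : lam ≠ 0 := by
  rintro rfl
  have := normSq_lt_re h
  simp at this

lemma disc_gt_ne_zero {lam : ℂ} (h : 1/2 < ‖lam - 1/2‖) : lam ≠ 0 := by
  rintro rfl
  have := re_lt_normSq h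
  simp at this

lemma one_lt_re_inv {lam : ℂ} (h : ‖lam - 1/2‖ < 1/2) : 1 < (lam⁻¹).re := by
  have h0 := disc_lt_ne_zero h
  rw [Complex.inv_re]
  exact (one_lt_div (Complex.normSq_pos.mpr h0)).mpr (normSq_lt_re h)

lemma re_inv_lt_one {lam : ℂ} (h : 1/2 < ‖lam - 1/2‖) : (lam⁻¹).re < 1 := by
  have h0 := disc_gt_ne_zero h
  rw [Complex.inv_re]
  exact (div_lt_one (Complex.normSq_pos.mpr h0)).mpr (re_lt_normSq h)

lemma dd_lower {lam : ℂ} (h : 1/2 < ‖lam - 1/2‖) (n : ℕ) :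
    ‖lam - 1/2‖ - 1/2 ≤ ‖dd lam n‖ := by
  have hsplit : lam - 1/2 = dd lam n + (1/((n:ℂ)+1) - 1/2) := by rw [dd]; ring
  have htri : ‖lam - 1/2‖ ≤ ‖dd lam n‖ + ‖1/((n:ℂ)+1) - 1/2‖ := by
    rw [hsplit]; exact norm_add_le _ _
  have hval : ‖1/((n:ℂ)+1) - 1/2‖ ≤ 1/2 := by
    have hcast : (1/((n:ℂ)+1) - 1/2) = (((1/((n:ℝ)+1) - 1/2 : ℝ)):ℂ) := by push_cast; ring
    rw [hcast, Complex.norm_real, Real.norm_eq_abs]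
    have h1 : (0:ℝ) < 1/((n:ℝ)+1) := by positivity
    have h2 : 1/((n:ℝ)+1) ≤ 1 := by
      rw [div_le_one (by positivity)]; linarith [Nat.cast_nonneg (α := ℝ) n]
    rw [abs_le]; constructor <;> linarith
  linarith

lemma dd_ne_zero {lam : ℂ} (h : 1/2 < ‖lam - 1/2‖) (n : ℕ) : dd lam n ≠ 0 := by
  intro h0
  have := dd_lower h n
  rw [h0] at this
  simp at this
  linarith

/-! ### elementary exp bound -/

lemma abs_one_sub_le (z : ℂ) :
    ‖1 - z‖ ≤ Real.exp (-z.re + Complex.normSq z / 2) := by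
  have h1 : Complex.normSq (1 - z) = 1 - 2*z.re + Complex.normSq z := by
    rw [Complex.normSq_sub]
    simp [Complex.normSq_one, Complex.conj_re]
    ring
  have h2 : Complex.normSq (1 - z) ≤ Real.exp (-2*z.re + Complex.normSq z) := by
    rw [h1]
    have := Real.add_one_le_exp (-2*z.re + Complex.normSq z)
    linarith
  apply le_of_pow_le_pow_left₀ two_ne_zero (Real.exp_nonneg _)
  rw [Complex.sq_norm]
  calc Complex.normSq (1 - z) ≤ Real.exp (-2*z.re + Complex.normSq z) := h2
    _ = (Real.exp (-z.re + Complex.normSq z / 2))^2 := by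
        rw [pow_two, ← Real.exp_add]
        congr 1
        ring

/-! ### pk basics -/

lemma pk_bddAbove (a : ℕ → ℝ) (k : ℕ) {x : ℕ → ℂ} (hx : memLambda a x) :
    BddAbove (Set.range fun n => wt a k n * ‖x n‖) := (hx k).bddAbove_range

lemma le_pk (a : ℕ → ℝ) (k : ℕ) {x : ℕ → ℂ} (hx : memLambda a x) (n : ℕ) :
    wt a k n * ‖x n‖ ≤ pk a k x := le_ciSup (pk_bddAbove a k hx) n

lemma pk_nonneg (a : ℕ → ℝ) (k : ℕ) {x : ℕ → ℂ} (hx : memLambda a x) : 0 ≤ pk a k x :=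
  le_trans (mul_nonneg (wt_pos a k 0).le (norm_nonneg _)) (le_pk a k hx 0)

lemma abs_le_pk (a : ℕ → ℝ) (k : ℕ) {x : ℕ → ℂ} (hx : memLambda a x) (n : ℕ) :
    ‖x n‖ ≤ pk a k x * Real.exp (a n / ((k:ℝ)+1)) := by
  have h := le_pk a k hx n
  rw [wt] at h
  have he : (0:ℝ) < Real.exp (-(a n)/((k:ℝ)+1)) := Real.exp_pos _
  have h2 : ‖x n‖ ≤ pk a k x / Real.exp (-(a n)/((k:ℝ)+1)) := by
    rw [le_div_iff₀ he]
    calc ‖x n‖ * Real.exp (-(a n)/((k:ℝ)+1))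
        = Real.exp (-(a n)/((k:ℝ)+1)) * ‖x n‖ := by ring
      _ ≤ pk a k x := h
  calc ‖x n‖ ≤ pk a k x / Real.exp (-(a n)/((k:ℝ)+1)) := h2
    _ = pk a k x * Real.exp (a n / ((k:ℝ)+1)) := by
        rw [div_eq_mul_inv, ← Real.exp_neg]
        congr 2
        ring

/-! ### membership from bounds -/

lemma memLambda_of_bounded (a : ℕ → ℝ) (htop : Tendsto a atTop atTop) (x : ℕ → ℂ)
    (h : ∀ k : ℕ, ∃ C : ℝ, ∀ n, wt a k n * ‖x n‖ ≤ C) : memLambda a x := by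
  intro k
  obtain ⟨C, hC⟩ := h (k+1)
  have hC0 : 0 ≤ C := le_trans (mul_nonneg (wt_pos a (k+1) 0).le (norm_nonneg _)) (hC 0)
  set c : ℝ := 1/((k:ℝ)+1) - 1/((k:ℝ)+2) with hc
  have hcpos : 0 < c := by
    rw [hc, sub_pos]
    apply one_div_lt_one_div_of_lt <;> [positivity; linarith]
  have hkey : ∀ n, wt a k n * ‖x n‖ ≤ C * Real.exp (-(a n * c)) := by
    intro n
    have hsplit : wt a k n = wt a (k+1) n * Real.exp (-(a n * c)) := by
      rw [wt, wt, ← Real.exp_add]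
      congr 1
      have hk1 : ((k:ℝ)+1) ≠ 0 := by positivity
      have hk2 : ((k:ℝ)+2) ≠ 0 := by positivity
      rw [hc]
      push_cast
      field_simp
      ring
    rw [hsplit, mul_comm (wt a (k+1) n) _, mul_assoc]
    rw [mul_comm C _]
    exact mul_le_mul_of_nonneg_left (hC n) (Real.exp_nonneg _)
  have htend : Tendsto (fun n => C * Real.exp (-(a n * c))) atTop (𝓝 0) := by
    have h1 : Tendsto (fun n => a n * c) atTop atTop := htop.atTop_mul_const hcpos
    have h2 : Tendsto (fun n => -(a n * c)) atTop atBot := tendsto_neg_atTop_atBot.comp h1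
    have h3 : Tendsto (fun n => Real.exp (-(a n * c))) atTop (𝓝 0) :=
      Real.tendsto_exp_atBot.comp h2
    simpa using h3.const_mul C
  exact squeeze_zero (fun n => mul_nonneg (wt_pos a k n).le (norm_nonneg _)) hkey htend

/-! ### the formal inverse -/

def sig (lam : ℂ) (y : ℕ → ℂ) : ℕ → ℂ
  | 0 => y 0 / dd lam 0
  | n+1 => (lam * sig lam y n + y (n+1)) / dd lam (n+1)

def Tres (lam : ℂ) (y : ℕ → ℂ) : ℕ → ℂ
  | 0 => sig lam y 0
  | n+1 => sig lam y (n+1) - sig lam y n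

lemma sum_Tres (lam : ℂ) (y : ℕ → ℂ) (n : ℕ) :
    ∑ i ∈ Finset.range (n+1), Tres lam y i = sig lam y n := by
  induction n with
  | zero => simp [Tres]
  | succ n ih => rw [Finset.sum_range_succ, ih, Tres]; ring

lemma dd_cast (lam : ℂ) (n : ℕ) : lam - 1/(((n:ℕ):ℂ)+1) = dd lam n := rfl

lemma Tres_op {lam : ℂ} (hd : ∀ n, dd lam n ≠ 0) (y : ℕ → ℂ) :
    lam • Tres lam y - cesaro (Tres lam y) = y := by
  funext n
  rw [apply_op, sum_Tres]
  cases n with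
  | zero =>
    show lam * Tres lam y 0 - sig lam y 0 / (((0:ℕ):ℂ)+1) = y 0
    rw [show Tres lam y 0 = sig lam y 0 from rfl]
    have h0 : sig lam y 0 * dd lam 0 = y 0 := div_mul_cancel₀ _ (hd 0)
    rw [dd] at h0
    push_cast at h0 ⊢
    linear_combination h0
  | succ n =>
    show lam * Tres lam y (n+1) - sig lam y (n+1) / (((n+1:ℕ):ℂ)+1) = y (n+1)
    rw [show Tres lam y (n+1) = sig lam y (n+1) - sig lam y n from rfl]
    have h0 : sig lam y (n+1) * dd lam (n+1) = lam * sig lam y n + y (n+1) := by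
      rw [sig]; exact div_mul_cancel₀ _ (hd (n+1))
    rw [dd] at h0
    push_cast at h0 ⊢
    linear_combination h0

lemma op_injective {lam : ℂ} (hd : ∀ n, dd lam n ≠ 0) (u v : ℕ → ℂ)
    (h : lam • u - cesaro u = lam • v - cesaro v) : u = v := by
  funext n
  induction n using Nat.strong_induction_on with
  | _ n ih =>
    have hc := congrFun h n
    rw [apply_op, apply_op] at hc
    have hsum : ∑ i ∈ Finset.range n, u i = ∑ i ∈ Finset.range n, v i :=
      Finset.sum_congr rfl fun i hi => ih i (Finset.mem_range.mp hi)
    rw [Finset.sum_range_succ, Finset.sum_range_succ, hsum] at hc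
    have hn0 : ((n:ℂ)+1) ≠ 0 := Nat.cast_add_one_ne_zero n
    have hkey : dd lam n * (u n - v n) = 0 := by
      rw [dd]
      field_simp at hc ⊢
      linear_combination hc
    rcases mul_eq_zero.mp hkey with h' | h'
    · exact absurd h' (hd n)
    · exact sub_eq_zero.mp h'

lemma sig_add (lam : ℂ) (x y : ℕ → ℂ) (n : ℕ) :
    sig lam (x + y) n = sig lam x n + sig lam y n := by
  induction n with
  | zero => simp [sig, Pi.add_apply]; ring
  | succ n ih => simp [sig, Pi.add_apply, ih]; ring

lemma sig_smul (lam : ℂ) (c : ℂ) (x : ℕ → ℂ) (n : ℕ) :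
    sig lam (c • x) n = c * sig lam x n := by
  induction n with
  | zero => simp [sig, Pi.smul_apply, smul_eq_mul]; ring
  | succ n ih => simp [sig, Pi.smul_apply, smul_eq_mul, ih]; ring

lemma Tres_add (lam : ℂ) (x y : ℕ → ℂ) : Tres lam (x + y) = Tres lam x + Tres lam y := by
  funext n
  cases n with
  | zero => simp [Tres, sig_add]
  | succ n => simp [Tres, sig_add]; ring

lemma Tres_smul (lam : ℂ) (c : ℂ) (x : ℕ → ℂ) : Tres lam (c • x) = c • Tres lam x := by
  funext n
  cases n with
  | zero => simp [Tres, sig_smul]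
  | succ n => simp [Tres, sig_smul]; ring

lemma one_le_key (β γ c x b : ℝ) (hc : 0 ≤ c) (hγ0 : 0 ≤ γ) (hγ1 : γ ≤ 1) (hβγ : β < γ)
    (hb1 : β ≤ b) (hb2 : -b ≤ β)
    (hx0 : 0 < x) (hx1 : x ≤ 1) (hx2 : (6*b+1) * x ≤ γ - β) :
    1 ≤ (1+γ*x)^2 * (1 - 2*β*x + c*x^2) := by
  have expand : (1+γ*x)^2 * (1 - 2*β*x + c*x^2)
      = 1 + 2*(γ-β)*x + (c - 4*γ*β + γ^2)*x^2 + (2*γ*c - 2*γ^2*β)*x^3 + γ^2*c*x^4 := by ring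
  have habs : 0 ≤ b := by linarith
  have hx2' : 0 ≤ x^2 := sq_nonneg x
  have h3 : x^3 ≤ x^2 := by nlinarith [sq_nonneg x]
  have t1 : 0 ≤ c*x^2 := by positivity
  have t2 : 0 ≤ γ^2*x^2 := by positivity
  have t3 : 0 ≤ 2*γ*c*x^3 := by positivity
  have t4 : 0 ≤ γ^2*c*x^4 := by positivity
  have hγsq : γ^2 ≤ 1 := by nlinarith
  have hgb : γ*β ≤ b := by nlinarith [mul_le_mul_of_nonneg_left hb1 hγ0, mul_le_mul_of_nonneg_right hγ1 habs]
  have hgb2 : γ^2*β ≤ b := by nlinarith [mul_le_mul_of_nonneg_left hb1 (sq_nonneg γ), mul_le_mul_of_nonneg_right hγsq habs]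
  have t5 : -(4*b*x^2) ≤ -(4*γ*β*x^2) := by nlinarith [mul_le_mul_of_nonneg_right hgb hx2']
  have t6 : -(2*b*x^2) ≤ -(2*γ^2*β*x^3) := by nlinarith [mul_le_mul_of_nonneg_right hgb2 (pow_nonneg hx0.le 3), mul_le_mul_of_nonneg_left h3 habs]
  have t8 : 0 ≤ (γ-β)*x := mul_nonneg (sub_pos.mpr hβγ).le hx0.le
  have t7 : (6*b+1) * x^2 ≤ (γ - β)*x := by nlinarith [mul_le_mul_of_nonneg_right hx2 hx0.le]
  linarith [t1, t2, t3, t4, t5, t6, t7, t8, expand]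

def qq (lam : ℂ) (n : ℕ) : ℝ := ‖lam‖ / ‖dd lam n‖

def Rr (lam : ℂ) : ℕ → ℝ
  | 0 => 1
  | n+1 => qq lam (n+1) * Rr lam n + 1

lemma qq_nonneg (lam : ℂ) (n : ℕ) : 0 ≤ qq lam n :=
  div_nonneg (norm_nonneg _) (norm_nonneg _)

lemma Rr_nonneg (lam : ℂ) (n : ℕ) : 0 ≤ Rr lam n := by
  induction n with
  | zero => norm_num [Rr]
  | succ n ih => rw [Rr]; have := qq_nonneg lam (n+1); positivity

lemma normSq_one_sub (z : ℂ) : Complex.normSq (1 - z) = 1 - 2*z.re + Complex.normSq z := by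
  rw [Complex.normSq_sub]
  simp [Complex.normSq_one, Complex.conj_re]
  ring

lemma dd_succ_eq {lam : ℂ} (hlam0 : lam ≠ 0) (n : ℕ) :
    dd lam (n+1) = lam * (1 - ((1/((n:ℝ)+2) : ℝ):ℂ) * lam⁻¹) := by
  have hcast : ((1/((n:ℝ)+2) : ℝ):ℂ) = 1/((n:ℂ)+2) := by push_cast; ring
  have hne : ((n:ℂ)+2) ≠ 0 := by
    intro h0
    have : ((n:ℝ)+2) = 0 := by exact_mod_cast congrArg Complex.re h0
    linarith [Nat.cast_nonneg (α := ℝ) n]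
  have h2 : lam * ((1/((n:ℂ)+2)) * lam⁻¹) = 1/((n:ℂ)+2) := by
    rw [mul_comm ((1:ℂ)/((n:ℂ)+2)) lam⁻¹, ← mul_assoc, mul_inv_cancel₀ hlam0, one_mul]
  rw [dd, hcast, mul_sub, mul_one, h2]
  push_cast
  ring

lemma Rr_growth {lam : ℂ} (h : 1/2 < ‖lam - 1/2‖) :
    ∃ B : ℝ, 0 < B ∧ ∀ n : ℕ, Rr lam n ≤ B * ((n:ℝ)+1) := by
  have hlam0 := disc_gt_ne_zero h
  set β := (lam⁻¹).re with hβ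
  have hβ1 : β < 1 := re_inv_lt_one h
  set γ := max ((β+1)/2) (1/2) with hγ
  have hβγ : β < γ := lt_of_lt_of_le (by linarith) (le_max_left _ _)
  have hγ0 : 0 ≤ γ := le_trans (by norm_num) (le_max_right _ _)
  have hγ1 : γ < 1 := max_lt (by linarith) (by norm_num)
  have h1γ : 0 < 1 - γ := by linarith
  have hε : 0 < γ - β := by linarith
  set b := |β| with hb
  set K : ℝ := 6*b+1 with hK
  have hKpos : 0 < K := by rw [hK]; have : 0 ≤ b := abs_nonneg β; linarith
  set N := ⌈K/(γ-β)⌉₊ with hN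
  -- the eventual bound on qq
  have hq : ∀ n : ℕ, N ≤ n → qq lam (n+1) ≤ 1 + γ * (1/((n:ℝ)+2)) := by
    intro n hn
    set x : ℝ := 1/((n:ℝ)+2) with hx
    have hn2 : (0:ℝ) < (n:ℝ)+2 := by positivity
    have hx0 : 0 < x := by rw [hx]; positivity
    have hx1 : x ≤ 1 := by
      rw [hx, div_le_one hn2]; linarith [Nat.cast_nonneg (α := ℝ) n]
    have hx2 : K * x ≤ γ - β := by
      have h1 : K/(γ-β) ≤ ((n:ℝ)+2) := by
        calc K/(γ-β) ≤ (N:ℝ) := Nat.le_ceil _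
          _ ≤ (n:ℝ) := by exact_mod_cast Nat.cast_le.mpr hn
          _ ≤ (n:ℝ)+2 := by linarith
      have h2 : K ≤ ((n:ℝ)+2)*(γ-β) := (div_le_iff₀ hε).mp h1
      rw [hx, mul_one_div, div_le_iff₀ hn2]
      linarith
    set z : ℂ := ((x:ℝ):ℂ) * lam⁻¹ with hz
    have hfac : dd lam (n+1) = lam * (1 - z) := dd_succ_eq hlam0 n
    have hzre : z.re = x * β := by
      rw [hz, hβ]
      simp
    set c : ℝ := 1/Complex.normSq lam with hc
    have hc0 : 0 ≤ c := by rw [hc]; exact one_div_nonneg.mpr (Complex.normSq_nonneg lam)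
    have hzsq : Complex.normSq z = c * x^2 := by
      rw [hz, Complex.normSq_mul, Complex.normSq_ofReal, Complex.normSq_inv, hc]
      ring
    have key := one_le_key β γ c x b hc0 hγ0 hγ1.le hβγ (le_abs_self β) (neg_abs_le β) hx0 hx1 hx2
    have hns : Complex.normSq (1-z) = 1 - 2*β*x + c*x^2 := by
      rw [normSq_one_sub, hzre, hzsq]; ring
    have key2 : 1 ≤ (1+γ*x)^2 * (‖1-z‖)^2 := by
      rw [Complex.sq_norm, hns]; exact key
    have h1zne : (1:ℂ) - z ≠ 0 := by
      intro h0
      apply dd_ne_zero h (n+1)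
      rw [hfac, h0, mul_zero]
    have habs1z : 0 < ‖1-z‖ := norm_pos_iff.mpr h1zne
    have hqq : qq lam (n+1) = 1 / ‖1-z‖ := by
      rw [qq, hfac, norm_mul, div_mul_eq_div_div, div_self (norm_ne_zero_iff.mpr hlam0)]
    rw [hqq, div_le_iff₀ habs1z]
    have ht : 0 ≤ (1+γ*x) * ‖1-z‖ := by positivity
    nlinarith [key2, ht]
  -- construct B
  set S0 := ∑ i ∈ Finset.range (N+1), Rr lam i with hS0
  have hsumnn : 0 ≤ S0 := Finset.sum_nonneg fun i _ => Rr_nonneg lam i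
  set B := 1/(1-γ) + S0 + 1 with hB
  have hinv : 0 < 1/(1-γ) := by positivity
  have hBpos : 0 < B := by rw [hB]; linarith
  have hγB : γ*B + 1 ≤ B := by
    have hid : (1-γ)*(1/(1-γ)) = 1 := mul_one_div_cancel h1γ.ne'
    have h3 : (1-γ)*B = (1-γ)*(1/(1-γ)) + (1-γ)*S0 + (1-γ)*1 := by rw [hB]; ring
    have h4 : 1 ≤ (1-γ)*B := by
      rw [h3, hid]
      have := mul_nonneg h1γ.le hsumnn
      linarith
    have h5 : (1-γ)*B = B - γ*B := by ring
    linarith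
  have hBsmall : ∀ n, n ≤ N → Rr lam n ≤ B * ((n:ℝ)+1) := by
    intro n hn
    have h1 : Rr lam n ≤ S0 :=
      Finset.single_le_sum (fun i _ => Rr_nonneg lam i) (Finset.mem_range.mpr (by omega))
    have h2 : Rr lam n ≤ B := by rw [hB]; linarith
    calc Rr lam n ≤ B := h2
      _ ≤ B * ((n:ℝ)+1) := le_mul_of_one_le_right hBpos.le (by linarith [Nat.cast_nonneg (α := ℝ) n])
  have hmain : ∀ n, N ≤ n → Rr lam n ≤ B * ((n:ℝ)+1) := by
    intro n hn
    induction n, hn using Nat.le_induction with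
    | base => exact hBsmall N le_rfl
    | succ n hn ih =>
      have hrec : Rr lam (n+1) = qq lam (n+1) * Rr lam n + 1 := rfl
      have hqn := hq n hn
      set u := (n:ℝ) with hu
      have hun : ((n+1:ℕ):ℝ) = u + 1 := by push_cast; ring
      rw [hrec, hun]
      have hb1 : qq lam (n+1) * Rr lam n ≤ (1 + γ*(1/(u+2))) * (B*(u+1)) :=
        mul_le_mul hqn ih (Rr_nonneg lam n) (by positivity)
      have hfrac : (u+1)/(u+2) ≤ 1 := by
        rw [div_le_one (by positivity)]; linarith
      have hid : (1 + γ*(1/(u+2))) * (B*(u+1)) = B*(u+1) + γ*B*((u+1)/(u+2)) := by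
        field_simp
      have hbd : γ*B*((u+1)/(u+2)) ≤ γ*B*1 :=
        mul_le_mul_of_nonneg_left hfrac (mul_nonneg hγ0 hBpos.le)
      rw [hid] at hb1
      calc qq lam (n+1) * Rr lam n + 1
          ≤ (B*(u+1) + γ*B*((u+1)/(u+2))) + 1 := by linarith
        _ ≤ (B*(u+1) + γ*B*1) + 1 := by linarith
        _ ≤ B*(u+1) + B := by linarith
        _ = B*(u+1+1) := by ring
  refine ⟨B, hBpos, fun n => ?_⟩
  rcases le_or_gt N n with h' | h'
  · exact hmain n h'
  · exact hBsmall n h'.le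

lemma sig_bound (a : ℕ → ℝ) (hmono : StrictMono a) {lam : ℂ}
    (h : 1/2 < ‖lam - 1/2‖) (k : ℕ) {y : ℕ → ℂ} (hy : memLambda a y) (n : ℕ) :
    ‖sig lam y n‖ ≤
      (pk a k y / (‖lam - 1/2‖ - 1/2)) * Real.exp (a n/((k:ℝ)+1)) * Rr lam n := by
  set δ := ‖lam - 1/2‖ - 1/2 with hδdef
  have hδ : 0 < δ := by rw [hδdef]; linarith
  have hdd := dd_lower h
  have hd := dd_ne_zero h
  set P := pk a k y with hP
  have hP0 : 0 ≤ P := pk_nonneg a k hy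
  induction n with
  | zero =>
    have h0 : sig lam y 0 = y 0 / dd lam 0 := rfl
    rw [h0, norm_div]
    have hRr : Rr lam 0 = 1 := rfl
    rw [hRr, mul_one]
    calc ‖y 0‖ / ‖dd lam 0‖
        ≤ (P * Real.exp (a 0/((k:ℝ)+1))) / δ :=
          div_le_div₀ (by positivity) (abs_le_pk a k hy 0) hδ (hdd 0)
      _ = P / δ * Real.exp (a 0/((k:ℝ)+1)) := by ring
  | succ n ih =>
    have hrec : sig lam y (n+1) * dd lam (n+1) = lam * sig lam y n + y (n+1) := by
      rw [show sig lam y (n+1) = (lam * sig lam y n + y (n+1)) / dd lam (n+1) from rfl]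
      exact div_mul_cancel₀ _ (hd (n+1))
    have hddpos : 0 < ‖dd lam (n+1)‖ := norm_pos_iff.mpr (hd (n+1))
    have habs : ‖sig lam y (n+1)‖ * ‖dd lam (n+1)‖
        = ‖lam * sig lam y n + y (n+1)‖ := by rw [← norm_mul, hrec]
    have hnum : ‖lam * sig lam y n + y (n+1)‖
        ≤ ‖lam‖ * ‖sig lam y n‖ + ‖y (n+1)‖ := by
      calc ‖lam * sig lam y n + y (n+1)‖
          ≤ ‖lam * sig lam y n‖ + ‖y (n+1)‖ := norm_add_le _ _
        _ = ‖lam‖ * ‖sig lam y n‖ + ‖y (n+1)‖ := by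
            rw [norm_mul]
    have h1 : ‖sig lam y (n+1)‖ ≤
        (‖lam‖ * ‖sig lam y n‖) / ‖dd lam (n+1)‖
          + ‖y (n+1)‖ / δ := by
      have h2 : ‖sig lam y (n+1)‖ ≤
          (‖lam‖ * ‖sig lam y n‖ + ‖y (n+1)‖)
            / ‖dd lam (n+1)‖ := by
        rw [le_div_iff₀ hddpos, habs]
        exact hnum
      have h3 : (‖lam‖ * ‖sig lam y n‖ + ‖y (n+1)‖)
            / ‖dd lam (n+1)‖
          = (‖lam‖ * ‖sig lam y n‖) / ‖dd lam (n+1)‖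
            + ‖y (n+1)‖ / ‖dd lam (n+1)‖ := add_div _ _ _
      have h4 : ‖y (n+1)‖ / ‖dd lam (n+1)‖
          ≤ ‖y (n+1)‖ / δ :=
        div_le_div₀ (norm_nonneg _) le_rfl hδ (hdd (n+1))
      rw [h3] at h2
      linarith
    have hqrw : (‖lam‖ * ‖sig lam y n‖) / ‖dd lam (n+1)‖
        = qq lam (n+1) * ‖sig lam y n‖ := by
      rw [qq]; ring
    rw [hqrw] at h1
    have hk1 : (0:ℝ) < (k:ℝ)+1 := by positivity
    have hexp : Real.exp (a n/((k:ℝ)+1)) ≤ Real.exp (a (n+1)/((k:ℝ)+1)) :=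
      Real.exp_le_exp.mpr ((div_le_div_iff_of_pos_right hk1).mpr (hmono (lt_add_one n)).le)
    have hq0 := qq_nonneg lam (n+1)
    have hR0 := Rr_nonneg lam n
    have hPδ : 0 ≤ P/δ := div_nonneg hP0 hδ.le
    have h5 : qq lam (n+1) * ‖sig lam y n‖
        ≤ qq lam (n+1) * (P/δ * Real.exp (a (n+1)/((k:ℝ)+1)) * Rr lam n) := by
      apply mul_le_mul_of_nonneg_left _ hq0
      calc ‖sig lam y n‖ ≤ P/δ * Real.exp (a n/((k:ℝ)+1)) * Rr lam n := ih
        _ ≤ P/δ * Real.exp (a (n+1)/((k:ℝ)+1)) * Rr lam n := by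
            apply mul_le_mul_of_nonneg_right _ hR0
            exact mul_le_mul_of_nonneg_left hexp hPδ
    have h6 : ‖y (n+1)‖ / δ ≤ P * Real.exp (a (n+1)/((k:ℝ)+1)) / δ :=
      div_le_div₀ (by positivity) (abs_le_pk a k hy (n+1)) hδ le_rfl
    have hRrsucc : Rr lam (n+1) = qq lam (n+1) * Rr lam n + 1 := rfl
    rw [hRrsucc]
    calc ‖sig lam y (n+1)‖
        ≤ qq lam (n+1) * ‖sig lam y n‖ + ‖y (n+1)‖ / δ := h1
      _ ≤ qq lam (n+1) * (P/δ * Real.exp (a (n+1)/((k:ℝ)+1)) * Rr lam n)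
            + P * Real.exp (a (n+1)/((k:ℝ)+1)) / δ := by linarith
      _ = P/δ * Real.exp (a (n+1)/((k:ℝ)+1)) * (qq lam (n+1) * Rr lam n + 1) := by ring

lemma Tres_bound (a : ℕ → ℝ) (hmono : StrictMono a) {lam : ℂ}
    (h : 1/2 < ‖lam - 1/2‖) {B : ℝ} (hB : 0 < B)
    (hRB : ∀ n : ℕ, Rr lam n ≤ B * ((n:ℝ)+1)) (k : ℕ) {y : ℕ → ℂ} (hy : memLambda a y) (n : ℕ) :
    wt a k n * ‖Tres lam y n‖ ≤
      ((1 + B/(‖lam - 1/2‖ - 1/2))/(‖lam - 1/2‖ - 1/2)) * pk a k y := by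
  set δ := ‖lam - 1/2‖ - 1/2 with hδdef
  have hδ : 0 < δ := by rw [hδdef]; linarith
  have hdd := dd_lower h
  have hd := dd_ne_zero h
  set P := pk a k y with hP
  have hP0 : 0 ≤ P := pk_nonneg a k hy
  have hsb := sig_bound a hmono h k hy
  have hBδ : 0 < B/δ := div_pos hB hδ
  cases n with
  | zero =>
    have h0 : Tres lam y 0 = sig lam y 0 := rfl
    rw [h0]
    have hone : wt a k 0 * Real.exp (a 0/((k:ℝ)+1)) = 1 := by
      rw [wt, ← Real.exp_add, show -(a 0)/((k:ℝ)+1) + a 0/((k:ℝ)+1) = 0 by ring, Real.exp_zero]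
    calc wt a k 0 * ‖sig lam y 0‖
        ≤ wt a k 0 * (P/δ * Real.exp (a 0/((k:ℝ)+1)) * Rr lam 0) :=
          mul_le_mul_of_nonneg_left (hsb 0) (wt_pos a k 0).le
      _ = P/δ * (wt a k 0 * Real.exp (a 0/((k:ℝ)+1))) * Rr lam 0 := by ring
      _ = P/δ := by rw [hone, show Rr lam 0 = 1 from rfl]; ring
      _ ≤ ((1 + B/δ)/δ) * P := by
          rw [div_mul_eq_mul_div, div_le_div_iff₀ hδ hδ]
          nlinarith [mul_nonneg (mul_nonneg hBδ.le hP0) hδ.le]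
  | succ n =>
    have hdde : dd lam (n+1) = lam - 1/((n:ℂ)+2) := by rw [dd]; push_cast; ring
    have hrec : sig lam y (n+1) * dd lam (n+1) = lam * sig lam y n + y (n+1) := by
      rw [show sig lam y (n+1) = (lam * sig lam y n + y (n+1)) / dd lam (n+1) from rfl]
      exact div_mul_cancel₀ _ (hd (n+1))
    have hTdd : Tres lam y (n+1) * dd lam (n+1) = y (n+1) + sig lam y n * (1/((n:ℂ)+2)) := by
      rw [show Tres lam y (n+1) = sig lam y (n+1) - sig lam y n from rfl]
      linear_combination hrec - sig lam y n * hdde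
    have hcabs : ‖1/((n:ℂ)+2)‖ = 1/((n:ℝ)+2) := by
      rw [show ((n:ℂ)+2) = (((n:ℝ)+2 : ℝ):ℂ) by push_cast; ring]
      rw [norm_div, norm_one, Complex.norm_real, Real.norm_eq_abs, abs_of_nonneg (by positivity)]
    have hn2 : (0:ℝ) < (n:ℝ)+2 := by positivity
    have hTabs : ‖Tres lam y (n+1)‖ * ‖dd lam (n+1)‖
        = ‖y (n+1) + sig lam y n * (1/((n:ℂ)+2))‖ := by rw [← norm_mul, hTdd]
    have hnum : ‖y (n+1) + sig lam y n * (1/((n:ℂ)+2))‖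
        ≤ ‖y (n+1)‖ + ‖sig lam y n‖ * (1/((n:ℝ)+2)) := by
      calc ‖y (n+1) + sig lam y n * (1/((n:ℂ)+2))‖
          ≤ ‖y (n+1)‖ + ‖sig lam y n * (1/((n:ℂ)+2))‖ :=
            norm_add_le _ _
        _ = ‖y (n+1)‖ + ‖sig lam y n‖ * (1/((n:ℝ)+2)) := by
            rw [norm_mul, hcabs]
    have hT1 : ‖Tres lam y (n+1)‖ ≤
        (‖y (n+1)‖ + ‖sig lam y n‖ * (1/((n:ℝ)+2)))/δ := by
      rw [le_div_iff₀ hδ]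
      calc ‖Tres lam y (n+1)‖ * δ
          ≤ ‖Tres lam y (n+1)‖ * ‖dd lam (n+1)‖ :=
            mul_le_mul_of_nonneg_left (hdd (n+1)) (norm_nonneg _)
        _ = ‖y (n+1) + sig lam y n * (1/((n:ℂ)+2))‖ := hTabs
        _ ≤ _ := hnum
    -- multiply by the weight
    have hw := wt_pos a k (n+1)
    have hwy : wt a k (n+1) * ‖y (n+1)‖ ≤ P := le_pk a k hy (n+1)
    have hws : wt a k (n+1) * ‖sig lam y n‖ ≤ P/δ * Rr lam n := by
      have hle := mul_le_mul_of_nonneg_left (hsb n) hw.le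
      have hexp1 : wt a k (n+1) * Real.exp (a n/((k:ℝ)+1)) ≤ 1 := by
        rw [wt, ← Real.exp_add]
        have hmn := (hmono (lt_add_one n)).le
        have hk1 : (0:ℝ) < (k:ℝ)+1 := by positivity
        calc Real.exp (-(a (n+1))/((k:ℝ)+1) + a n/((k:ℝ)+1)) ≤ Real.exp 0 :=
              Real.exp_le_exp.mpr (by
                rw [← add_div]
                exact div_nonpos_of_nonpos_of_nonneg (by linarith) hk1.le)
          _ = 1 := Real.exp_zero
      calc wt a k (n+1) * ‖sig lam y n‖
          ≤ wt a k (n+1) * (P/δ * Real.exp (a n/((k:ℝ)+1)) * Rr lam n) := hle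
        _ = (wt a k (n+1) * Real.exp (a n/((k:ℝ)+1))) * (P/δ * Rr lam n) := by ring
        _ ≤ 1 * (P/δ * Rr lam n) :=
            mul_le_mul_of_nonneg_right hexp1
              (mul_nonneg (div_nonneg hP0 hδ.le) (Rr_nonneg lam n))
        _ = P/δ * Rr lam n := one_mul _
    have hfrac : ((n:ℝ)+1)/((n:ℝ)+2) ≤ 1 := by rw [div_le_one hn2]; linarith
    have hRn : Rr lam n * (1/((n:ℝ)+2)) ≤ B := by
      calc Rr lam n * (1/((n:ℝ)+2)) ≤ (B * ((n:ℝ)+1)) * (1/((n:ℝ)+2)) :=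
            mul_le_mul_of_nonneg_right (hRB n) (by positivity)
        _ = B * (((n:ℝ)+1)/((n:ℝ)+2)) := by ring
        _ ≤ B * 1 := mul_le_mul_of_nonneg_left hfrac hB.le
        _ = B := mul_one B
    have hPδ : 0 ≤ P/δ := div_nonneg hP0 hδ.le
    calc wt a k (n+1) * ‖Tres lam y (n+1)‖
        ≤ wt a k (n+1) * ((‖y (n+1)‖ + ‖sig lam y n‖ * (1/((n:ℝ)+2)))/δ) :=
          mul_le_mul_of_nonneg_left hT1 hw.le
      _ = (wt a k (n+1) * ‖y (n+1)‖
            + (wt a k (n+1) * ‖sig lam y n‖) * (1/((n:ℝ)+2)))/δ := by ring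
      _ ≤ (P + (P/δ * Rr lam n) * (1/((n:ℝ)+2)))/δ := by
          apply (div_le_div_iff_of_pos_right hδ).mpr
          have h7 := mul_le_mul_of_nonneg_right hws
            (le_of_lt (show (0:ℝ) < 1/((n:ℝ)+2) by positivity))
          linarith
      _ ≤ (P + P/δ * B)/δ := by
          apply (div_le_div_iff_of_pos_right hδ).mpr
          have h8 : P/δ * (Rr lam n * (1/((n:ℝ)+2))) ≤ P/δ * B := mul_le_mul_of_nonneg_left hRn hPδ
          have h9 : (P/δ * Rr lam n) * (1/((n:ℝ)+2)) = P/δ * (Rr lam n * (1/((n:ℝ)+2))) := by ring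
          linarith
      _ = ((1 + B/δ)/δ) * P := by ring

lemma inres_of (a : ℕ → ℝ) (hmono : StrictMono a) (htop : Tendsto a atTop atTop)
    {lam : ℂ} (h : 1/2 < ‖lam - 1/2‖) : InResolvent a lam := by
  obtain ⟨B, hB, hRB⟩ := Rr_growth h
  have hd := dd_ne_zero h
  set δ := ‖lam - 1/2‖ - 1/2 with hδdef
  have hδ : 0 < δ := by rw [hδdef]; linarith
  set M := (1 + B/δ)/δ with hM
  have hMpos : 0 < M := by
    rw [hM]
    have := div_pos hB hδ
    positivity
  refine ⟨Tres lam, ?_, ?_, ?_, ?_, ?_, ?_⟩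
  · intro x hx
    apply memLambda_of_bounded a htop
    intro k
    exact ⟨M * pk a k x, fun n => Tres_bound a hmono h hB hRB k hx n⟩
  · intro x y _ _
    exact Tres_add lam x y
  · intro c x _
    exact Tres_smul lam c x
  · intro k
    refine ⟨k, M, hMpos, fun x hx => ?_⟩
    exact ciSup_le fun n => Tres_bound a hmono h hB hRB k hx n
  · intro x hx
    exact op_injective hd _ _ (Tres_op hd (lam • x - cesaro x))
  · intro x hx
    exact Tres_op hd x

lemma sum_inv_ge (n : ℕ) :
    Real.log ((n:ℝ)+2) - Real.log 2 ≤ ∑ j ∈ Finset.range n, 1/((j:ℝ)+2) := by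
  induction n with
  | zero => simp
  | succ n ih =>
    rw [Finset.sum_range_succ]
    have hstep : Real.log ((n:ℝ)+3) - Real.log ((n:ℝ)+2) ≤ 1/((n:ℝ)+2) := by
      have hpos : (0:ℝ) < ((n:ℝ)+3)/((n:ℝ)+2) := by positivity
      have hlog := Real.log_le_sub_one_of_pos hpos
      rw [Real.log_div (by positivity) (by positivity)] at hlog
      have heq : ((n:ℝ)+3)/((n:ℝ)+2) - 1 = 1/((n:ℝ)+2) := by
        field_simp
        norm_num
      linarith
    push_cast
    rw [show ((n:ℝ)+1+2) = (n:ℝ)+3 by ring]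
    push_cast at ih
    linarith

lemma sum_inv_sq_le (n : ℕ) : ∑ j ∈ Finset.range n, (1/((j:ℝ)+2))^2 ≤ 1 := by
  have key : ∀ m : ℕ, ∑ j ∈ Finset.range m, (1/((j:ℝ)+2))^2 ≤ 1 - 1/((m:ℝ)+1) := by
    intro m
    induction m with
    | zero => simp
    | succ m ih =>
      rw [Finset.sum_range_succ]
      have h1 : (0:ℝ) < (m:ℝ)+1 := by positivity
      have h2 : (0:ℝ) < (m:ℝ)+2 := by positivity
      have hstep : (1/((m:ℝ)+2))^2 ≤ 1/((m:ℝ)+1) - 1/((m:ℝ)+2) := by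
        rw [div_pow, one_pow, div_sub_div _ _ h1.ne' h2.ne', div_le_div_iff₀ (by positivity) (by positivity)]
        ring_nf
        nlinarith
      push_cast
      rw [show ((m:ℝ)+1+1) = (m:ℝ)+2 by ring]
      push_cast at ih
      linarith
  have h3 : (0:ℝ) < (n:ℝ)+1 := by positivity
  calc ∑ j ∈ Finset.range n, (1/((j:ℝ)+2))^2 ≤ 1 - 1/((n:ℝ)+1) := key n
    _ ≤ 1 := by
        have : 0 < 1/((n:ℝ)+1) := by positivity
        linarith

lemma not_inres_disc_aux (a : ℕ → ℝ) (s' : ℝ) (hs' : 0 < s')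
    (hbound : ∀ᶠ n in atTop, a n ≤ s' * Real.log ((n:ℝ)+1)) {lam : ℂ}
    (hβgt : 1 < (lam⁻¹).re) (hne : ∀ n : ℕ, lam ≠ 1/((n:ℂ)+1)) : ¬ InResolvent a lam := by
  rintro ⟨T, hT1, -, -, -, -, hT6⟩
  have hd : ∀ n, dd lam n ≠ 0 := fun n h0 => hne n (sub_eq_zero.mp h0)
  have hlam0 : lam ≠ 0 := by
    intro h0
    rw [h0] at hβgt
    simp at hβgt
    linarith
  set β := (lam⁻¹).re with hβdef
  have hβ1 : (1:ℝ) < β := hβgt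
  set u : ℕ → ℂ := T (ee 0) with hu
  have hmem : memLambda a u := hT1 _ (memLambda_ee a 0)
  have heq : lam • u - cesaro u = ee 0 := hT6 _ (memLambda_ee a 0)
  set S : ℕ → ℂ := fun n => ∑ i ∈ Finset.range (n+1), u i with hSdef
  have hS0 : (lam - 1) * S 0 = 1 := by
    have hc := congrFun heq 0
    rw [apply_op] at hc
    rw [show ee 0 0 = 1 by simp [ee]] at hc
    have hS0' : S 0 = u 0 := by simp [hSdef]
    rw [hS0']
    simp only [zero_add, Nat.cast_zero, Finset.sum_range_one] at hc
    linear_combination hc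
  have hS0ne : S 0 ≠ 0 := by
    intro h0
    rw [h0, mul_zero] at hS0
    exact zero_ne_one hS0
  have husucc : ∀ n, u (n+1) = S (n+1) - S n := by
    intro n
    rw [hSdef]
    simp only [Finset.sum_range_succ]
    ring
  have hSrec : ∀ n, dd lam (n+1) * S (n+1) = lam * S n := by
    intro n
    have hc := congrFun heq (n+1)
    rw [apply_op] at hc
    rw [show ee 0 (n+1) = 0 by simp [ee]] at hc
    have hsum : ∑ i ∈ Finset.range (n+1+1), u i = S (n+1) := rfl
    rw [hsum] at hc
    rw [show dd lam (n+1) = lam - 1/(((n+1:ℕ):ℂ)+1) from rfl]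
    linear_combination hc - lam * (husucc n)
  have habs : ∀ n, ‖S (n+1)‖
      = (‖lam‖ / ‖dd lam (n+1)‖) * ‖S n‖ := by
    intro n
    have h1 := congrArg norm (hSrec n)
    rw [norm_mul, norm_mul] at h1
    have hddabs : 0 < ‖dd lam (n+1)‖ := norm_pos_iff.mpr (hd (n+1))
    rw [div_mul_eq_mul_div, eq_div_iff hddabs.ne', mul_comm (‖S (n+1)‖)]
    exact h1
  set c2 := Complex.normSq lam⁻¹ with hc2
  have hc2nn : 0 ≤ c2 := Complex.normSq_nonneg _
  have hrat : ∀ n : ℕ, Real.exp (β * (1/((n:ℝ)+2)) - c2/2 * (1/((n:ℝ)+2))^2)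
      ≤ ‖lam‖ / ‖dd lam (n+1)‖ := by
    intro n
    set x : ℝ := 1/((n:ℝ)+2) with hx
    set z : ℂ := ((x:ℝ):ℂ) * lam⁻¹ with hz
    have hfac : dd lam (n+1) = lam * (1 - z) := dd_succ_eq hlam0 n
    have hzre : z.re = x * β := by rw [hz, hβdef]; simp
    have hzsq : Complex.normSq z = c2 * x^2 := by
      rw [hz, Complex.normSq_mul, Complex.normSq_ofReal, hc2]; ring
    have h1zne : (1:ℂ) - z ≠ 0 := fun h0 => hd (n+1) (by rw [hfac, h0, mul_zero])
    have habs1z : 0 < ‖1-z‖ := norm_pos_iff.mpr h1zne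
    have hub : ‖1-z‖ ≤ Real.exp (-(x*β) + c2*x^2/2) := by
      have h2 := abs_one_sub_le z
      rw [hzre, hzsq] at h2
      exact h2
    have hratio : ‖lam‖ / ‖dd lam (n+1)‖ = 1/‖1-z‖ := by
      rw [hfac, norm_mul, div_mul_eq_div_div, div_self (norm_ne_zero_iff.mpr hlam0)]
    rw [hratio, le_div_iff₀ habs1z]
    calc Real.exp (β*x - c2/2*x^2) * ‖1-z‖
        ≤ Real.exp (β*x - c2/2*x^2) * Real.exp (-(x*β) + c2*x^2/2) :=
          mul_le_mul_of_nonneg_left hub (Real.exp_nonneg _)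
      _ = 1 := by rw [← Real.exp_add, show β*x - c2/2*x^2 + (-(x*β) + c2*x^2/2) = 0 by ring, Real.exp_zero]
  have hlow : ∀ n, ‖S 0‖ *
      Real.exp (∑ j ∈ Finset.range n, (β*(1/((j:ℝ)+2)) - c2/2*(1/((j:ℝ)+2))^2))
        ≤ ‖S n‖ := by
    intro n
    induction n with
    | zero => simp
    | succ n ih =>
      rw [habs n]
      calc ‖S 0‖ * Real.exp (∑ j ∈ Finset.range (n+1), (β*(1/((j:ℝ)+2)) - c2/2*(1/((j:ℝ)+2))^2))
          = Real.exp (β*(1/((n:ℝ)+2)) - c2/2*(1/((n:ℝ)+2))^2) *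
              (‖S 0‖ * Real.exp (∑ j ∈ Finset.range n, (β*(1/((j:ℝ)+2)) - c2/2*(1/((j:ℝ)+2))^2))) := by
            rw [Finset.sum_range_succ, Real.exp_add]; ring
        _ ≤ Real.exp (β*(1/((n:ℝ)+2)) - c2/2*(1/((n:ℝ)+2))^2) * ‖S n‖ :=
            mul_le_mul_of_nonneg_left ih (Real.exp_nonneg _)
        _ ≤ (‖lam‖ / ‖dd lam (n+1)‖) * ‖S n‖ :=
            mul_le_mul_of_nonneg_right (hrat n) (norm_nonneg _)
  set c₀ := ‖S 0‖ * Real.exp (-(β*Real.log 2) - c2/2) with hc₀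
  have hc₀pos : 0 < c₀ := mul_pos (norm_pos_iff.mpr hS0ne) (Real.exp_pos _)
  have hSn : ∀ n : ℕ, c₀ * Real.exp (β * Real.log ((n:ℝ)+2)) ≤ ‖S n‖ := by
    intro n
    have hsplit : ∑ j ∈ Finset.range n, (β*(1/((j:ℝ)+2)) - c2/2*(1/((j:ℝ)+2))^2)
        = β*(∑ j ∈ Finset.range n, 1/((j:ℝ)+2)) - c2/2*(∑ j ∈ Finset.range n, (1/((j:ℝ)+2))^2) := by
      rw [Finset.sum_sub_distrib, Finset.mul_sum, Finset.mul_sum]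
    have hsumlb : β*(Real.log ((n:ℝ)+2) - Real.log 2) - c2/2
        ≤ ∑ j ∈ Finset.range n, (β*(1/((j:ℝ)+2)) - c2/2*(1/((j:ℝ)+2))^2) := by
      rw [hsplit]
      have h1 := mul_le_mul_of_nonneg_left (sum_inv_ge n) (by linarith : (0:ℝ) ≤ β)
      have h2 := mul_le_mul_of_nonneg_left (sum_inv_sq_le n) (by linarith : (0:ℝ) ≤ c2/2)
      linarith
    calc c₀ * Real.exp (β * Real.log ((n:ℝ)+2))
        = ‖S 0‖ * Real.exp (β*(Real.log ((n:ℝ)+2) - Real.log 2) - c2/2) := by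
          rw [hc₀, mul_assoc, ← Real.exp_add]
          congr 2
          ring
      _ ≤ ‖S 0‖ *
            Real.exp (∑ j ∈ Finset.range n, (β*(1/((j:ℝ)+2)) - c2/2*(1/((j:ℝ)+2))^2)) :=
          mul_le_mul_of_nonneg_left (Real.exp_le_exp.mpr hsumlb) (norm_nonneg _)
      _ ≤ ‖S n‖ := hlow n
  -- lower bound for |u (n+1)|
  have hmne : ∀ n : ℕ, ((n:ℂ)+2) ≠ 0 := by
    intro n h0
    have : ((n:ℝ)+2) = 0 := by exact_mod_cast congrArg Complex.re h0
    linarith [Nat.cast_nonneg (α := ℝ) n]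
  have hmabs : ∀ n : ℕ, ‖(n:ℂ)+2‖ = (n:ℝ)+2 := by
    intro n
    rw [show ((n:ℂ)+2) = (((n:ℝ)+2 : ℝ):ℂ) by push_cast; ring, Complex.norm_real, Real.norm_eq_abs,
      abs_of_nonneg (by positivity)]
  have hddub : ∀ n : ℕ, ‖dd lam (n+1)‖ ≤ ‖lam‖ + 1 := by
    intro n
    have h1 : ‖((n+1:ℕ):ℂ)+1‖ = ((n+1:ℕ):ℝ)+1 := by
      rw [show (((n+1:ℕ):ℂ)+1) = ((((n+1:ℕ):ℝ)+1 : ℝ):ℂ) by push_cast; ring,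
        Complex.norm_real, Real.norm_eq_abs, abs_of_nonneg (by positivity)]
    have h2 : ‖1/(((n+1:ℕ):ℂ)+1)‖ ≤ 1 := by
      rw [norm_div, norm_one, h1, div_le_one (by positivity)]
      linarith [Nat.cast_nonneg (α := ℝ) (n+1)]
    calc ‖dd lam (n+1)‖
        = ‖lam + -(1/(((n+1:ℕ):ℂ)+1))‖ := by rw [dd, sub_eq_add_neg]
      _ ≤ ‖lam‖ + ‖-(1/(((n+1:ℕ):ℂ)+1))‖ := norm_add_le _ _
      _ = ‖lam‖ + ‖1/(((n+1:ℕ):ℂ)+1)‖ := by rw [norm_neg]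
      _ ≤ ‖lam‖ + 1 := by linarith
  have hurel : ∀ n : ℕ, u (n+1) * (dd lam (n+1) * ((n:ℂ)+2)) = S n := by
    intro n
    have hdde : dd lam (n+1) = lam - 1/((n:ℂ)+2) := by rw [dd]; push_cast; ring
    have hdd2 : dd lam (n+1) * ((n:ℂ)+2) = lam*((n:ℂ)+2) - 1 := by
      rw [hdde, sub_mul, div_mul_cancel₀ _ (hmne n)]
    have h2 : (lam*((n:ℂ)+2) - 1) * S (n+1) = lam * S n * ((n:ℂ)+2) := by
      calc (lam*((n:ℂ)+2) - 1) * S (n+1) = (dd lam (n+1) * ((n:ℂ)+2)) * S (n+1) := by rw [hdd2]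
        _ = (dd lam (n+1) * S (n+1)) * ((n:ℂ)+2) := by ring
        _ = (lam * S n) * ((n:ℂ)+2) := by rw [hSrec n]
    rw [hdd2]
    linear_combination h2 + (lam*((n:ℂ)+2) - 1) * (husucc n)
  have hulow : ∀ n : ℕ, ‖S n‖ / ((‖lam‖ + 1) * ((n:ℝ)+2))
      ≤ ‖u (n+1)‖ := by
    intro n
    have h1 := congrArg norm (hurel n)
    rw [norm_mul, norm_mul, hmabs n] at h1
    have hpos : 0 < (‖lam‖ + 1) * ((n:ℝ)+2) := by positivity
    rw [div_le_iff₀ hpos]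
    calc ‖S n‖
        = ‖u (n+1)‖ * (‖dd lam (n+1)‖ * ((n:ℝ)+2)) := h1.symm
      _ ≤ ‖u (n+1)‖ * ((‖lam‖ + 1) * ((n:ℝ)+2)) := by
          apply mul_le_mul_of_nonneg_left _ (norm_nonneg _)
          exact mul_le_mul_of_nonneg_right (hddub n) (by positivity)
  -- choose k
  obtain ⟨N0, hN0⟩ := eventually_atTop.mp hbound
  set k := ⌈s'/(β-1)⌉₊ with hk
  have hβm1 : (0:ℝ) < β - 1 := by linarith
  have hsk : s'/((k:ℝ)+1) ≤ β - 1 := by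
    have h1 : s'/(β-1) ≤ (k:ℝ) := Nat.le_ceil _
    have h2 : s' ≤ (β-1)*(k:ℝ) := by
      rw [div_le_iff₀ hβm1] at h1
      linarith
    rw [div_le_iff₀ (by positivity : (0:ℝ) < (k:ℝ)+1)]
    nlinarith [Nat.cast_nonneg (α := ℝ) k]
  set c₁ := c₀/(‖lam‖ + 1) with hc₁
  have hc₁pos : 0 < c₁ := div_pos hc₀pos (by positivity)
  have hfinal : ∀ n : ℕ, N0 ≤ n + 1 → c₁ ≤ wt a k (n+1) * ‖u (n+1)‖ := by
    intro n hn
    have ha := hN0 (n+1) hn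
    have hacast : a (n+1) ≤ s' * Real.log ((n:ℝ)+2) := by
      have hcc : (((n+1:ℕ)):ℝ)+1 = (n:ℝ)+2 := by push_cast; ring
      rwa [hcc] at ha
    set L := Real.log ((n:ℝ)+2) with hL
    have hL0 : 0 ≤ L := Real.log_nonneg (by linarith [Nat.cast_nonneg (α := ℝ) n])
    have hk1 : (0:ℝ) < (k:ℝ)+1 := by positivity
    have hW : Real.exp (-(s'*L)/((k:ℝ)+1)) ≤ wt a k (n+1) := by
      rw [wt]
      apply Real.exp_le_exp.mpr
      apply (div_le_div_iff_of_pos_right hk1).mpr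
      linarith
    have hposD : 0 < (‖lam‖ + 1)*((n:ℝ)+2) := by positivity
    have hA : c₀ * Real.exp (β*L)/((‖lam‖ + 1)*((n:ℝ)+2)) ≤ ‖u (n+1)‖ := by
      calc c₀ * Real.exp (β*L)/((‖lam‖ + 1)*((n:ℝ)+2))
          ≤ ‖S n‖/((‖lam‖ + 1)*((n:ℝ)+2)) :=
            (div_le_div_iff_of_pos_right hposD).mpr (hSn n)
        _ ≤ ‖u (n+1)‖ := hulow n
    have hexpm : ((n:ℝ)+2) = Real.exp L := by
      rw [hL, Real.exp_log (by positivity)]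
    have h1 : (1:ℝ) ≤ Real.exp ((β - 1 - s'/((k:ℝ)+1))*L) :=
      Real.one_le_exp (mul_nonneg (by linarith) hL0)
    have h2 : Real.exp (-(s'*L)/((k:ℝ)+1)) * (c₀ * Real.exp (β*L)/((‖lam‖ + 1)*((n:ℝ)+2)))
        ≤ wt a k (n+1) * ‖u (n+1)‖ :=
      mul_le_mul hW hA (by positivity) (wt_pos a k (n+1)).le
    have e1 : Real.exp (-(s'*L)/((k:ℝ)+1)) * Real.exp (β*L) / Real.exp L
        = Real.exp ((β - 1 - s'/((k:ℝ)+1))*L) := by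
      rw [← Real.exp_add, ← Real.exp_sub]
      congr 1
      ring
    have h3 : Real.exp (-(s'*L)/((k:ℝ)+1)) * (c₀ * Real.exp (β*L)/((‖lam‖ + 1)*((n:ℝ)+2)))
        = c₁ * Real.exp ((β - 1 - s'/((k:ℝ)+1))*L) := by
      have hDne : ‖lam‖ + 1 ≠ 0 := by positivity
      rw [hc₁, ← e1, hexpm]
      field_simp
    calc c₁ ≤ c₁ * Real.exp ((β - 1 - s'/((k:ℝ)+1))*L) := le_mul_of_one_le_right hc₁pos.le h1
      _ = Real.exp (-(s'*L)/((k:ℝ)+1)) * (c₀ * Real.exp (β*L)/((‖lam‖ + 1)*((n:ℝ)+2))) := h3.symm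
      _ ≤ wt a k (n+1) * ‖u (n+1)‖ := h2
  have hev := (hmem k).eventually_lt_const hc₁pos
  obtain ⟨N1, hN1⟩ := eventually_atTop.mp hev
  have hn0 : N0 ≤ max N0 N1 + 1 := le_trans (le_max_left _ _) (Nat.le_succ _)
  have hn1 : N1 ≤ max N0 N1 + 1 := le_trans (le_max_right _ _) (Nat.le_succ _)
  exact absurd (hfinal (max N0 N1) hn0) (not_le.mpr (hN1 (max N0 N1 + 1) hn1))

lemma not_inres_disc (a : ℕ → ℝ) (hmono : StrictMono a) (h1 : ∀ n, 1 < a n)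
    (htop : Tendsto a atTop atTop) (hS : (Sk a 0).Nonempty) {lam : ℂ}
    (hdisc : ‖lam - 1/2‖ < 1/2) : ¬ InResolvent a lam := by
  by_cases hcase : ∃ m : ℕ, lam = 1/((m:ℂ)+1)
  · obtain ⟨m, rfl⟩ := hcase
    exact not_inres_recip a m
  · push_neg at hcase
    obtain ⟨s, hs⟩ := hS
    rw [Sk] at hs
    simp only [Set.mem_setOf_eq, Nat.cast_zero, zero_add, div_one] at hs
    set s' := max s 1 with hs'def
    have hs'pos : (0:ℝ) < s' := lt_of_lt_of_le one_pos (le_max_right _ _)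
    have hs'sum : Summable (fun n : ℕ => Real.exp (a n) / ((n:ℝ)+1)^s') := by
      apply Summable.of_nonneg_of_le (fun n => by positivity) (fun n => ?_) hs
      have hbase : (1:ℝ) ≤ (n:ℝ)+1 := by linarith [Nat.cast_nonneg (α := ℝ) n]
      have hrpow : ((n:ℝ)+1)^s ≤ ((n:ℝ)+1)^s' :=
        Real.rpow_le_rpow_of_exponent_le hbase (le_max_left _ _)
      exact div_le_div_of_nonneg_left (Real.exp_nonneg _) (Real.rpow_pos_of_pos (by linarith) _) hrpow
    have hev1 : ∀ᶠ n in atTop, Real.exp (a n) / ((n:ℝ)+1)^s' < 1 :=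
      hs'sum.tendsto_atTop_zero.eventually_lt_const one_pos
    have hbound : ∀ᶠ n in atTop, a n ≤ s' * Real.log ((n:ℝ)+1) := by
      filter_upwards [hev1] with n hn
      have hbase : (0:ℝ) < (n:ℝ)+1 := by positivity
      have hp : (0:ℝ) < ((n:ℝ)+1)^s' := Real.rpow_pos_of_pos hbase _
      have h2 : Real.exp (a n) ≤ ((n:ℝ)+1)^s' := by
        rw [div_lt_one hp] at hn
        exact hn.le
      calc a n = Real.log (Real.exp (a n)) := (Real.log_exp _).symm
        _ ≤ Real.log (((n:ℝ)+1)^s') := Real.log_le_log (Real.exp_pos _) h2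
        _ = s' * Real.log ((n:ℝ)+1) := Real.log_rpow hbase _
    exact not_inres_disc_aux a s' hs'pos hbound (one_lt_re_inv hdisc) hcase


/-- if `S_1(α) ≠ ∅` then
`{|λ - 1/2| < 1/2} ∪ {1/m : m ≥ 1} ⊆ σ(C; Λ₀(α)) ⊆ {|λ - 1/2| ≤ 1/2}`; in
particular the closure of `σ(C; Λ₀(α))` is the closed disc `{|λ - 1/2| ≤ 1/2}`. -/
theorem stmt14 (a : ℕ → ℝ) (hmono : StrictMono a) (h1 : ∀ n, 1 < a n)
    (htop : Tendsto a atTop atTop) (hS : (Sk a 0).Nonempty) :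
    (∀ lam : ℂ, ‖lam - 1 / 2‖ < 1 / 2 → ¬ InResolvent a lam) ∧
    (∀ m : ℕ, ¬ InResolvent a (1 / ((m : ℂ) + 1))) ∧
    (∀ lam : ℂ, ¬ InResolvent a lam → ‖lam - 1 / 2‖ ≤ 1 / 2) ∧
    closure {lam : ℂ | ¬ InResolvent a lam} = {lam : ℂ | ‖lam - 1 / 2‖ ≤ 1 / 2} := by
  have part1 : ∀ lam : ℂ, ‖lam - 1 / 2‖ < 1 / 2 → ¬ InResolvent a lam :=
    fun lam hl => not_inres_disc a hmono h1 htop hS hl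
  have part2 : ∀ m : ℕ, ¬ InResolvent a (1 / ((m : ℂ) + 1)) := fun m => not_inres_recip a m
  have part3 : ∀ lam : ℂ, ¬ InResolvent a lam → ‖lam - 1 / 2‖ ≤ 1 / 2 := by
    intro lam hn
    by_contra hgt
    push_neg at hgt
    exact hn (inres_of a hmono htop hgt)
  refine ⟨part1, part2, part3, ?_⟩
  have hsub1 : Metric.ball (1/2 : ℂ) (1/2) ⊆ {lam : ℂ | ¬ InResolvent a lam} := by
    intro lam hl
    rw [Metric.mem_ball, Complex.dist_eq] at hl
    exact part1 lam hl
  have hsub2 : {lam : ℂ | ¬ InResolvent a lam} ⊆ Metric.closedBall (1/2 : ℂ) (1/2) := by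
    intro lam hl
    rw [Metric.mem_closedBall, Complex.dist_eq]
    exact part3 lam hl
  have hset : Metric.closedBall (1/2:ℂ) (1/2) = {lam : ℂ | ‖lam - 1/2‖ ≤ 1/2} :=
    Set.ext fun z => by rw [Metric.mem_closedBall, Complex.dist_eq]; rfl
  rw [← hset]
  apply Set.Subset.antisymm
  · exact closure_minimal hsub2 Metric.isClosed_closedBall
  · rw [← closure_ball (1/2 : ℂ) (by norm_num : (1/2:ℝ) ≠ 0)]
    exact closure_mono hsub1
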